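/- The spectrum recursion holds: if Λ̃_d denotes the multiset of eigenvalues of the operator φ ↦ |x|_1 · L̃_d φ restricted to homogeneous polynomials of degree d (where L̃ = Σ_n (x_n∂_n² + α_n∂_n) maps degree d+1 to degree d homogeneous polynomials after multiplication), then Λ̃_{d+1} = (2d + ᾱ + Λ̃_d) ∪ {0 with multiplicity C(N,d+1) − C(N,d)}, where C(N,d) = binom(d+N−1, d) is the dimension of the space of degree-d homogeneous polynomials in N variables. -/

import Mathlib

open MvPolynomial Module

noncomputable section

/-- The reduced operator L̃ = Σ_n (x_n ∂_n² + α_n ∂_n) as a linear endomorphism of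
the polynomial algebra. -/
def LtilLM (N : ℕ) (α : Fin N → ℝ) :
    MvPolynomial (Fin N) ℝ →ₗ[ℝ] MvPolynomial (Fin N) ℝ :=
  ∑ n, (LinearMap.mulLeft ℝ (X n) ∘ₗ (pderiv n).toLinearMap ∘ₗ (pderiv n).toLinearMap
        + α n • (pderiv n).toLinearMap)

/-- The operator T : φ ↦ |x|₁ · L̃φ; it maps homogeneous polynomials of degree d to
homogeneous polynomials of degree d. -/
def Tlift (N : ℕ) (α : Fin N → ℝ) : Module.End ℝ (MvPolynomial (Fin N) ℝ) :=
  LinearMap.mulLeft ℝ (∑ n, X n) ∘ₗ LtilLM N α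

namespace SpectrumRecursionAux

variable {N : ℕ}

lemma homog_span (e : ℕ) : homogeneousSubmodule (Fin N) ℝ e =
    Submodule.span ℝ ((fun m : Fin N →₀ ℕ => (monomial m (1:ℝ))) '' {m | m.degree = e}) := by
  rw [homogeneousSubmodule_eq_finsupp_supported, AddMonoidAlgebra.supported_eq_span_single]
  rfl

lemma apply_mem_of_monomial {e : ℕ} {S : Submodule ℝ (MvPolynomial (Fin N) ℝ)}
    (f : MvPolynomial (Fin N) ℝ →ₗ[ℝ] MvPolynomial (Fin N) ℝ)
    (h : ∀ m : Fin N →₀ ℕ, m.degree = e → f (monomial m 1) ∈ S)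
    {φ : MvPolynomial (Fin N) ℝ} (hφ : φ.IsHomogeneous e) : f φ ∈ S := by
  have hle : homogeneousSubmodule (Fin N) ℝ e ≤ S.comap f := by
    rw [homog_span, Submodule.span_le]
    rintro _ ⟨m, hm, rfl⟩
    exact h m hm
  exact hle hφ

lemma mydeg_add (a b : Fin N →₀ ℕ) : (a+b).degree = a.degree + b.degree := by
  simp [Finsupp.degree_eq_weight_one, map_add]

lemma mydeg_single (n : Fin N) (k : ℕ) : (Finsupp.single n k).degree = k := by
  simp [Finsupp.degree, Finsupp.support_single_ne_zero, Finsupp.single_eq_same]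
  rcases Nat.eq_zero_or_pos k with h | h
  · simp [h]
  · exact Finsupp.degree_single n k

lemma sub_single_add (m : Fin N →₀ ℕ) (n : Fin N) (h : m n ≠ 0) :
    (m - Finsupp.single n 1) + Finsupp.single n 1 = m :=
  tsub_add_cancel_of_le (Finsupp.single_le_iff.mpr (Nat.one_le_iff_ne_zero.mpr h))

lemma degree_sub_single (m : Fin N →₀ ℕ) (n : Fin N) (h : m n ≠ 0) :
    (m - Finsupp.single n 1).degree + 1 = m.degree := by
  conv_rhs => rw [← sub_single_add m n h]
  rw [mydeg_add, mydeg_single]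

lemma degree_eq_sum_univ (m : Fin N →₀ ℕ) : m.degree = ∑ n, m n :=
  Finset.sum_subset (Finset.subset_univ _)
    (by intro x _ hx; simpa using (Finsupp.notMem_support_iff.mp hx))

lemma X_mul_pderiv_monomial (n : Fin N) (m : Fin N →₀ ℕ) :
    X n * pderiv n (monomial m (1:ℝ)) = monomial m ((m n : ℝ)) := by
  rw [pderiv_monomial, one_mul]
  by_cases h : m n = 0
  · simp [h]
  · rw [X, monomial_mul, one_mul, add_comm, sub_single_add m n h]

lemma euler {e : ℕ} {φ : MvPolynomial (Fin N) ℝ} (hφ : φ.IsHomogeneous e) :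
    ∑ n, X n * pderiv n φ = (e : ℝ) • φ := by
  set f : MvPolynomial (Fin N) ℝ →ₗ[ℝ] MvPolynomial (Fin N) ℝ :=
    ∑ n, (LinearMap.mulLeft ℝ (X n) ∘ₗ (pderiv n).toLinearMap) with hf
  set g : MvPolynomial (Fin N) ℝ →ₗ[ℝ] MvPolynomial (Fin N) ℝ :=
    (e : ℝ) • LinearMap.id with hg
  have hle : homogeneousSubmodule (Fin N) ℝ e ≤ LinearMap.eqLocus f g := by
    rw [homog_span, Submodule.span_le]
    rintro _ ⟨m, hm, rfl⟩
    show f _ = g _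
    rw [hf, hg]
    simp only [LinearMap.sum_apply, LinearMap.comp_apply, LinearMap.mulLeft_apply,
      Derivation.coeFn_coe, LinearMap.smul_apply, LinearMap.id_apply]
    rw [Finset.sum_congr rfl (fun n _ => X_mul_pderiv_monomial n m)]
    rw [← map_sum (monomial m) (fun n => (m n : ℝ)) Finset.univ]
    rw [← Nat.cast_sum, ← degree_eq_sum_univ, hm, smul_monomial, smul_eq_mul, mul_one]
  have h2 : f φ = g φ := hle hφ
  rw [hf, hg] at h2
  simpa only [LinearMap.sum_apply, LinearMap.comp_apply, LinearMap.mulLeft_apply,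
    Derivation.coeFn_coe, LinearMap.smul_apply, LinearMap.id_apply] using h2

lemma pderiv_monomial_mem {e : ℕ} (n : Fin N) (m : Fin N →₀ ℕ) (hm : m.degree = e + 1) :
    (pderiv n (monomial m (1:ℝ))) ∈ homogeneousSubmodule (Fin N) ℝ e := by
  rw [pderiv_monomial, one_mul]
  by_cases h : m n = 0
  · simp [h]
  · rw [mem_homogeneousSubmodule]
    apply isHomogeneous_monomial
    have := degree_sub_single m n h
    omega

lemma X_pderiv2_monomial_mem {e : ℕ} (n : Fin N) (m : Fin N →₀ ℕ) (hm : m.degree = e + 1) :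
    X n * pderiv n (pderiv n (monomial m (1:ℝ))) ∈ homogeneousSubmodule (Fin N) ℝ e := by
  rw [pderiv_monomial, one_mul, pderiv_monomial]
  have hsub : ((m - Finsupp.single n 1 : Fin N →₀ ℕ) n) = m n - 1 := by
    rw [Finsupp.tsub_apply, Finsupp.single_eq_same]
  rw [hsub]
  by_cases h : m n ≤ 1
  · have hc : (m n : ℝ) * ((m n - 1 : ℕ) : ℝ) = 0 := by
      interval_cases hmn : m n <;> simp
    rw [hc]
    simp
  · have h0 : m n ≠ 0 := by omega
    have h' : ((m - Finsupp.single n 1 : Fin N →₀ ℕ) n) ≠ 0 := by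
      rw [hsub]; omega
    rw [X, monomial_mul, one_mul, mem_homogeneousSubmodule]
    apply isHomogeneous_monomial
    have h1 := degree_sub_single m n h0
    have h2 := degree_sub_single (m - Finsupp.single n 1) n h'
    rw [mydeg_add, mydeg_single]
    omega

lemma Ltil_mem {e : ℕ} (α : Fin N → ℝ) {φ : MvPolynomial (Fin N) ℝ}
    (hφ : φ.IsHomogeneous (e+1)) :
    LtilLM N α φ ∈ homogeneousSubmodule (Fin N) ℝ e := by
  apply apply_mem_of_monomial _ _ hφ
  intro m hm
  rw [LtilLM]
  simp only [LinearMap.sum_apply, LinearMap.add_apply, LinearMap.comp_apply,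
    LinearMap.mulLeft_apply, LinearMap.smul_apply, Derivation.coeFn_coe]
  apply Submodule.sum_mem
  intro n _
  exact Submodule.add_mem _ (X_pderiv2_monomial_mem n m hm)
    (Submodule.smul_mem _ _ (pderiv_monomial_mem n m hm))

lemma Ltil_zero (α : Fin N → ℝ) {φ : MvPolynomial (Fin N) ℝ} (hφ : φ.IsHomogeneous 0) :
    LtilLM N α φ = 0 := by
  have h0 : ∀ n : Fin N, pderiv n φ = 0 := by
    intro n
    have hmem : (pderiv n).toLinearMap φ ∈ (⊥ : Submodule ℝ (MvPolynomial (Fin N) ℝ)) := by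
      apply apply_mem_of_monomial _ ?_ hφ
      intro m hm
      have hm0 : m = 0 := by rwa [Finsupp.degree_eq_zero_iff] at hm
      subst hm0
      simp [Derivation.coeFn_coe, pderiv_monomial]
    simpa [Derivation.coeFn_coe] using hmem
  rw [LtilLM]
  simp only [LinearMap.sum_apply, LinearMap.add_apply, LinearMap.comp_apply,
    LinearMap.mulLeft_apply, LinearMap.smul_apply, Derivation.coeFn_coe, h0]
  simp

lemma Ltil_comm (α : Fin N → ℝ) (φ : MvPolynomial (Fin N) ℝ) :
    LtilLM N α ((∑ k, X k) * φ) =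
      (∑ k, X k) * LtilLM N α φ + 2 * (∑ n, X n * pderiv n φ) + (∑ n, α n) • φ := by
  have hs : ∀ n : Fin N, pderiv n (∑ k, X k : MvPolynomial (Fin N) ℝ) = 1 := by
    intro n
    rw [map_sum, Finset.sum_eq_single n (fun k _ hk => pderiv_X_of_ne hk) (by simp),
      pderiv_X_self]
  have hd : ∀ (n : Fin N) (ψ : MvPolynomial (Fin N) ℝ),
      pderiv n ((∑ k, X k) * ψ) = ψ + (∑ k, X k) * pderiv n ψ := by
    intro n ψ
    rw [pderiv_mul, hs, one_mul]
  simp only [LtilLM, LinearMap.sum_apply, LinearMap.add_apply, LinearMap.comp_apply,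
    LinearMap.mulLeft_apply, LinearMap.smul_apply, Derivation.coeFn_coe]
  simp only [hd, map_add]
  rw [Finset.mul_sum, Finset.mul_sum, Finset.sum_smul]
  rw [← Finset.sum_add_distrib, ← Finset.sum_add_distrib]
  apply Finset.sum_congr rfl
  intro n _
  simp only [smul_eq_C_mul, smul_add]
  ring

def degSet (N e : ℕ) : Set (Fin N →₀ ℕ) := {m | m.degree = e}

def degEquivSym (N e : ℕ) : (degSet N e) ≃ Sym (Fin N) e := by
  refine Equiv.subtypeEquiv (Multiset.toFinsupp (α := Fin N)).symm.toEquiv ?_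
  intro m
  show m.degree = e ↔ Multiset.card (Finsupp.toMultiset m) = e
  rw [Finsupp.card_toMultiset]
  rfl

instance (N e : ℕ) : Fintype (degSet N e) := Fintype.ofEquiv _ (degEquivSym N e).symm

def homogEquiv (N e : ℕ) : ↥(homogeneousSubmodule (Fin N) ℝ e) ≃ₗ[ℝ] (degSet N e →₀ ℝ) :=
  (LinearEquiv.ofEq _ _ (homogeneousSubmodule_eq_finsupp_supported (Fin N) ℝ e)).trans
    (AddMonoidAlgebra.supportedEquivFinsupp (degSet N e))

instance homogFD (N e : ℕ) : FiniteDimensional ℝ ↥(homogeneousSubmodule (Fin N) ℝ e) :=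
  LinearEquiv.finiteDimensional (homogEquiv N e).symm

lemma finrank_homog (N e : ℕ) :
    finrank ℝ ↥(homogeneousSubmodule (Fin N) ℝ e) = (e + N - 1).choose e := by
  rw [(homogEquiv N e).finrank_eq, finrank_finsupp_self, Fintype.card_congr (degEquivSym N e),
    Sym.card_sym_eq_multichoose, Nat.multichoose_eq, Fintype.card_fin, Nat.add_comm]

lemma eig_le_swap {V W : Type*} [AddCommGroup V] [Module ℝ V] [AddCommGroup W] [Module ℝ W]
    [FiniteDimensional ℝ W] (A : V →ₗ[ℝ] W) (B : W →ₗ[ℝ] V) {lam : ℝ}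
    (hlam : lam ≠ 0) :
    finrank ℝ ↥(Module.End.eigenspace (B ∘ₗ A) lam)
      ≤ finrank ℝ ↥(Module.End.eigenspace (A ∘ₗ B) lam) := by
  set E1 := Module.End.eigenspace (B ∘ₗ A) lam
  set E2 := Module.End.eigenspace (A ∘ₗ B) lam
  have hmem : ∀ v : E1, A ↑v ∈ E2 := by
    rintro ⟨v, hv⟩
    rw [Module.End.mem_eigenspace_iff] at hv ⊢
    rw [LinearMap.comp_apply] at hv ⊢
    show A (B (A v)) = lam • A v
    rw [hv, map_smul]
  set g : E1 →ₗ[ℝ] E2 := LinearMap.codRestrict E2 (A ∘ₗ E1.subtype) hmem with hg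
  have hinj : Function.Injective g := by
    intro v w hvw
    have h1 : A ↑v = A ↑w := by
      have := congrArg (Subtype.val) hvw
      exact this
    have hv := (Module.End.mem_eigenspace_iff).mp v.2
    have hw := (Module.End.mem_eigenspace_iff).mp w.2
    rw [LinearMap.comp_apply] at hv hw
    have h2 : lam • (v : V) = lam • (w : V) := by rw [← hv, ← hw, h1]
    exact Subtype.ext (smul_right_injective V hlam h2)
  exact LinearMap.finrank_le_finrank_of_injective hinj

lemma eig_swap {V W : Type*} [AddCommGroup V] [Module ℝ V] [AddCommGroup W] [Module ℝ W]
    [FiniteDimensional ℝ V] [FiniteDimensional ℝ W]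
    (A : V →ₗ[ℝ] W) (B : W →ₗ[ℝ] V) {lam : ℝ} (hlam : lam ≠ 0) :
    finrank ℝ ↥(Module.End.eigenspace (B ∘ₗ A) lam)
      = finrank ℝ ↥(Module.End.eigenspace (A ∘ₗ B) lam) :=
  le_antisymm (eig_le_swap A B hlam) (eig_le_swap B A hlam)

end SpectrumRecursionAux

open SpectrumRecursionAux in
theorem spectrum_recursion (N d : ℕ) (hN : 1 ≤ N) (α : Fin N → ℝ) (hα : ∀ n, 0 < α n)
    (hnonneg : ∀ (e : ℕ) (lam : ℝ) (φ : MvPolynomial (Fin N) ℝ),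
      φ.IsHomogeneous e → φ ≠ 0 → Tlift N α φ = lam • φ → 0 ≤ lam) :
    (∀ lam : ℝ, lam ≠ 0 →
      Module.finrank ℝ
        ↥(homogeneousSubmodule (Fin N) ℝ (d + 1) ⊓ Module.End.eigenspace (Tlift N α) lam)
      = Module.finrank ℝ
        ↥(homogeneousSubmodule (Fin N) ℝ d ⊓
            Module.End.eigenspace (Tlift N α) (lam - (2 * (d : ℝ) + ∑ n, α n)))) ∧
    Module.finrank ℝ
        ↥(homogeneousSubmodule (Fin N) ℝ (d + 1) ⊓ Module.End.eigenspace (Tlift N α) 0)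
      = (d + 1 + N - 1).choose (d + 1) - (d + N - 1).choose d := by
  -- setup
  set s : MvPolynomial (Fin N) ℝ := ∑ n, X n with hs_def
  have hs1 : s.IsHomogeneous 1 :=
    IsHomogeneous.sum Finset.univ _ 1 (fun n _ => isHomogeneous_X ℝ n)
  have hsne : s ≠ 0 := by
    intro h
    have h2 := congrArg (eval (fun _ : Fin N => (1:ℝ))) h
    rw [hs_def] at h2
    simp [map_sum] at h2
    omega
  set c : ℝ := 2*(d:ℝ) + ∑ n, α n with hc
  have hcpos : 0 < c := by
    have h1 : 0 < ∑ n, α n :=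
      Finset.sum_pos (fun n _ => hα n) ⟨⟨0, hN⟩, Finset.mem_univ _⟩
    have h2 : (0:ℝ) ≤ 2*(d:ℝ) := by positivity
    rw [hc]; linarith
  -- Tlift maps H e to H e
  have Tlift_mem : ∀ (e : ℕ) (φ : MvPolynomial (Fin N) ℝ), φ.IsHomogeneous e →
      Tlift N α φ ∈ homogeneousSubmodule (Fin N) ℝ e := by
    intro e φ hφ
    cases e with
    | zero =>
        rw [Tlift, LinearMap.comp_apply, Ltil_zero α hφ, map_zero]
        exact Submodule.zero_mem _
    | succ e =>
        rw [Tlift, LinearMap.comp_apply, LinearMap.mulLeft_apply, ← hs_def]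
        have := hs1.mul (Ltil_mem α hφ)
        rwa [Nat.add_comm] at this
  -- restricted operators
  set Lop : ↥(homogeneousSubmodule (Fin N) ℝ (d+1)) →ₗ[ℝ] ↥(homogeneousSubmodule (Fin N) ℝ d) :=
    LinearMap.codRestrict _ ((LtilLM N α) ∘ₗ (homogeneousSubmodule (Fin N) ℝ (d+1)).subtype)
      (fun v => Ltil_mem α v.2) with hLop
  set Mop : ↥(homogeneousSubmodule (Fin N) ℝ d) →ₗ[ℝ] ↥(homogeneousSubmodule (Fin N) ℝ (d+1)) :=
    LinearMap.codRestrict _ ((LinearMap.mulLeft ℝ s) ∘ₗ (homogeneousSubmodule (Fin N) ℝ d).subtype)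
      (fun v => by
        have := hs1.mul v.2
        rwa [Nat.add_comm] at this) with hMop
  have Tr_mem : ∀ (e : ℕ) (v : ↥(homogeneousSubmodule (Fin N) ℝ e)),
      ((Tlift N α) ∘ₗ (homogeneousSubmodule (Fin N) ℝ e).subtype) v
        ∈ homogeneousSubmodule (Fin N) ℝ e := fun e v => Tlift_mem e ↑v v.2
  set Tr : (e : ℕ) → Module.End ℝ ↥(homogeneousSubmodule (Fin N) ℝ e) := fun e =>
    LinearMap.codRestrict _ ((Tlift N α) ∘ₗ (homogeneousSubmodule (Fin N) ℝ e).subtype)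
      (Tr_mem e) with hTr
  -- dimension transfer from ambient intersection to restricted eigenspace
  have key0 : ∀ (e : ℕ) (μ : ℝ),
      Module.finrank ℝ ↥(homogeneousSubmodule (Fin N) ℝ e ⊓
        Module.End.eigenspace (Tlift N α) μ)
      = Module.finrank ℝ ↥(Module.End.eigenspace (Tr e) μ) := by
    intro e μ
    have hEq : Module.End.eigenspace (Tr e) μ =
        Submodule.comap (homogeneousSubmodule (Fin N) ℝ e).subtype
          (homogeneousSubmodule (Fin N) ℝ e ⊓ Module.End.eigenspace (Tlift N α) μ) := by
      ext v
      simp only [Module.End.mem_eigenspace_iff, Submodule.mem_comap, Submodule.mem_inf,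
        Submodule.coe_subtype]
      constructor
      · intro h
        refine ⟨v.2, ?_⟩
        have := congrArg Subtype.val h
        simpa [hTr] using this
      · intro h
        apply Subtype.ext
        simpa [hTr] using h.2
    rw [hEq]
    exact ((Submodule.comapSubtypeEquivOfLe inf_le_left).finrank_eq).symm
  have hT1 : Tr (d+1) = Mop ∘ₗ Lop := by
    apply LinearMap.ext
    intro v
    apply Subtype.ext
    simp [hTr, hMop, hLop, Tlift]
    rfl
  have hT2 : Lop ∘ₗ Mop = Tr d + c • LinearMap.id := by
    apply LinearMap.ext
    intro v
    apply Subtype.ext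
    have hlhs : (((Lop ∘ₗ Mop) v : ↥(homogeneousSubmodule (Fin N) ℝ d)) :
        MvPolynomial (Fin N) ℝ) = LtilLM N α (s * ↑v) := by
      simp [hLop, hMop]
      rfl
    have hrhs : (((Tr d + c • (LinearMap.id : Module.End ℝ ↥(homogeneousSubmodule (Fin N) ℝ d))) v :
        ↥(homogeneousSubmodule (Fin N) ℝ d)) : MvPolynomial (Fin N) ℝ)
        = Tlift N α ↑v + c • (v : MvPolynomial (Fin N) ℝ) := by
      simp [hTr]
    rw [hlhs, hrhs, hs_def, Ltil_comm, euler v.2, Tlift, LinearMap.comp_apply,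
      LinearMap.mulLeft_apply, hc]
    simp only [smul_eq_C_mul, map_add, map_mul, map_ofNat]

    ring
  constructor
  · -- nonzero eigenvalues
    intro lam hlam
    have heq : Module.End.eigenspace (Tr d + c • LinearMap.id) lam
        = Module.End.eigenspace (Tr d) (lam - c) := by
      ext v
      simp only [Module.End.mem_eigenspace_iff, LinearMap.add_apply, LinearMap.smul_apply,
        LinearMap.id_apply, sub_smul]
      constructor
      · intro h
        rw [← h]; abel
      · intro h
        rw [h]; abel
    rw [key0 (d+1) lam, key0 d (lam - c), hT1, eig_swap Lop Mop hlam, hT2, heq]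
  · -- zero eigenvalue
    rw [key0 (d+1) 0, Module.End.eigenspace_zero, hT1]
    have hMinj : Function.Injective Mop := by
      intro v w h
      apply Subtype.ext
      have h2 := congrArg Subtype.val h
      simp only [hMop, LinearMap.codRestrict_apply, LinearMap.comp_apply,
        LinearMap.mulLeft_apply, Submodule.coe_subtype] at h2
      exact mul_left_cancel₀ hsne h2
    have hker : LinearMap.ker (Mop ∘ₗ Lop) = LinearMap.ker Lop := by
      rw [LinearMap.ker_comp, LinearMap.ker_eq_bot.mpr hMinj]
      rfl
    rw [hker]
    have hABinj : Function.Injective (Lop ∘ₗ Mop) := by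
      rw [← LinearMap.ker_eq_bot]
      rw [LinearMap.ker_eq_bot']
      intro v hv
      by_contra hvne
      rw [hT2] at hv
      simp only [LinearMap.add_apply, LinearMap.smul_apply, LinearMap.id_apply] at hv
      have hneg : (-c) • v = -(c • v) := neg_smul c v
      have hv2 : Tr d v = (-c) • v := by
        rw [hneg]
        exact eq_neg_of_add_eq_zero_left hv
      have hv3 : Tlift N α ↑v = (-c) • (v : MvPolynomial (Fin N) ℝ) := by
        have := congrArg Subtype.val hv2
        simpa [hTr] using this
      have hvne' : (v : MvPolynomial (Fin N) ℝ) ≠ 0 := fun h => hvne (Subtype.ext h)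
      have := hnonneg d (-c) ↑v v.2 hvne' hv3
      linarith
    have hLsurj : Function.Surjective Lop := by
      have hsurj : Function.Surjective (Lop ∘ₗ Mop) :=
        LinearMap.injective_iff_surjective.mp hABinj
      rw [LinearMap.coe_comp] at hsurj
      exact hsurj.of_comp
    have hrank := LinearMap.finrank_range_add_finrank_ker Lop
    rw [LinearMap.range_eq_top.mpr hLsurj, finrank_top] at hrank
    rw [finrank_homog N d, finrank_homog N (d+1)] at hrank
    omega

end
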